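/- Assume κ > −1 and set λ := √(1+κ). Then the ±1-eigenspaces of φ are parametrized by the eigenspaces of h: { v ∈ V : φ(v) = v } = { x + φ(x) : x ∈ V, h(x) = λ·x } and { v ∈ V : φ(v) = −v } = { x − φ(x) : x ∈ V, h(x) = −λ·x }. -/

import Mathlib

theorem stmt_5
    {V : Type*} [AddCommGroup V] [Module ℝ V]
    (ξ : V) (η : V →ₗ[ℝ] ℝ) (φ h : V →ₗ[ℝ] V) (κ : ℝ)
    (hηξ : η ξ = 1)
    (hφ2 : ∀ v, φ (φ v) = v - η v • ξ)
    (hφξ : φ ξ = 0)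
    (hηφ : ∀ v, η (φ v) = 0)
    (hhξ : h ξ = 0)
    (hηh : ∀ v, η (h v) = 0)
    (hhφ : ∀ v, h (φ v) = - φ (h v))
    (hh2 : ∀ v, h (h v) = (1 + κ) • φ (φ v))
    (hκ : -1 < κ)
    (lam : ℝ) (hlam : lam = Real.sqrt (1 + κ)) :
    ({v : V | φ v = v} = {w : V | ∃ x : V, h x = lam • x ∧ w = x + φ x}) ∧
    ({v : V | φ v = -v} = {w : V | ∃ x : V, h x = (-lam) • x ∧ w = x - φ x}) := by
  have h1κ : (0:ℝ) < 1 + κ := by linarith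
  have hlam_pos : 0 < lam := by rw [hlam]; exact Real.sqrt_pos.mpr h1κ
  have hlam_ne : lam ≠ 0 := ne_of_gt hlam_pos
  have hlam_sq : lam * lam = 1 + κ := by
    rw [hlam]; exact Real.mul_self_sqrt (le_of_lt h1κ)
  constructor
  · ext v
    simp only [Set.mem_setOf_eq]
    constructor
    · intro hv
      have hηv : η v = 0 := by rw [← hv, hηφ]
      have hφh : φ (h v) = - h v := by
        have := hhφ v; rw [hv] at this
        conv_rhs => rw [this, neg_neg]
      refine ⟨(2⁻¹:ℝ) • v + (2*lam)⁻¹ • h v, ?_, ?_⟩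
      · rw [map_add, map_smul, map_smul, hh2, hφ2, hηv, zero_smul, sub_zero]
        match_scalars <;> field_simp <;> nlinarith [hlam_sq]
      · rw [map_add, map_smul, map_smul, hv, hφh]
        rw [smul_neg]
        match_scalars <;> field_simp <;> ring
    · rintro ⟨x, hx, rfl⟩
      have hηx : η x = 0 := by
        have := hηh x
        rw [hx, map_smul, smul_eq_mul] at this
        exact (mul_eq_zero.mp this).resolve_left hlam_ne
      rw [map_add, hφ2, hηx, zero_smul, sub_zero, add_comm]
  · ext v
    simp only [Set.mem_setOf_eq]
    constructor
    · intro hv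
      have hηv : η v = 0 := by
        have := hηφ v
        rw [hv, map_neg, neg_eq_zero] at this
        exact this
      have hφh : φ (h v) = h v := by
        have := hhφ v; rw [hv, map_neg] at this
        exact (neg_inj.mp this).symm
      refine ⟨(2⁻¹:ℝ) • v - (2*lam)⁻¹ • h v, ?_, ?_⟩
      · rw [map_sub, map_smul, map_smul, hh2, hφ2, hηv, zero_smul, sub_zero]
        match_scalars <;> field_simp <;> nlinarith [hlam_sq]
      · rw [map_sub, map_smul, map_smul, hv, hφh]
        rw [smul_neg]
        match_scalars <;> field_simp <;> ring
    · rintro ⟨x, hx, rfl⟩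
      have hηx : η x = 0 := by
        have := hηh x
        rw [hx, map_smul, smul_eq_mul] at this
        rcases mul_eq_zero.mp this with h' | h'
        · exact absurd h' (by simpa using hlam_ne)
        · exact h'
      rw [map_sub, hφ2, hηx, zero_smul, sub_zero]
      abel
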